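/- Let L = L^{(1)}⋯L^{(p)} be a product of N×N lower unit bidiagonal matrices with subdiagonal entries γ_{(m-1)p+m+i} (row m of L^{(i)}), all nonzero. Then for each m and each s = 1,…,p, setting Γ_s = Π_{j=2}^{p-s+1} γ_{(m-j)p+m+s}, the entry γ_{(m-1)p+m+s} satisfies γ_{(m-1)p+m+s} = ( l_{m,m-p+s-1} - Σ_{1≤σ₁<⋯<σ_{p-s+1}≤p, σ₁≠s} Π_{j=1}^{p-s+1} γ_{(m-j)p+σ_j+m-j+1} ) / Γ_s. -/
import Mathlib

open Finset in
lemma key {F : Type*} [Field F] {N : ℕ} :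
    ∀ (n : ℕ) (w : Fin n → ℕ → F) (A : Fin n → Matrix (Fin N) (Fin N) F)
      (_ : ∀ i r c, A i r c = if (r : ℕ) = (c : ℕ) then 1
        else if (r : ℕ) = (c : ℕ) + 1 then w i c else 0)
      (m c : ℕ) (hm : m < N) (hc : c < N),
    (List.ofFn A).prod ⟨m, hm⟩ ⟨c, hc⟩ =
      if c ≤ m then
        ∑ σ ∈ Finset.univ.filter
            (fun σ : Fin (m - c) → Fin n => ∀ a b, a < b → σ a < σ b),
          ∏ j : Fin (m - c), w (σ j) (m - ((j : ℕ) + 1))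
      else 0 := by
  intro n
  induction n with
  | zero =>
    intro w A hA m c hm hc
    simp only [List.ofFn_zero, List.prod_nil]
    rw [Matrix.one_apply]
    by_cases h : c ≤ m
    · rw [if_pos h]
      by_cases h2 : m = c
      · subst h2
        rw [Nat.sub_self]
        rw [Finset.filter_true_of_mem (fun σ _ => by intro a b hab; exact a.elim0)]
        simp
      · rw [if_neg (by simp [Fin.ext_iff]; omega)]
        symm
        apply Finset.sum_eq_zero
        intro σ _
        exact (σ ⟨0, by omega⟩).elim0
    · rw [if_neg h, if_neg (by simp [Fin.ext_iff]; omega)]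
  | succ n IH =>
    intro w A hA m c hm hc
    rw [List.ofFn_succ, List.prod_cons, Matrix.mul_apply]
    set P := (List.ofFn fun i : Fin n => A i.succ).prod with hP
    have hIH : ∀ (r c' : ℕ) (hr : r < N) (hc' : c' < N), P ⟨r, hr⟩ ⟨c', hc'⟩ =
        if c' ≤ r then
          ∑ σ ∈ Finset.univ.filter
              (fun σ : Fin (r - c') → Fin n => ∀ a b, a < b → σ a < σ b),
            ∏ j : Fin (r - c'), w (σ j).succ (r - ((j : ℕ) + 1))
        else 0 :=
      fun r c' hr hc' =>
        IH (fun i => w i.succ) (fun i => A i.succ) (fun i r c => hA i.succ r c) r c' hr hc'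
    rcases Nat.eq_zero_or_pos m with hm0 | hm1
    · subst hm0
      rw [Finset.sum_eq_single (⟨0, hm⟩ : Fin N)]
      · rw [hA, if_pos rfl, one_mul, hIH]
        by_cases h : c ≤ 0
        · rw [if_pos h, if_pos h, Nat.zero_sub,
            Finset.filter_true_of_mem (fun σ _ => fun a b hab => a.elim0),
            Finset.filter_true_of_mem (fun σ _ => fun a b hab => a.elim0)]
          simp
        · rw [if_neg h, if_neg h]
      · intro b _ hb
        have hb' : ((⟨0, hm⟩ : Fin N) : ℕ) ≠ (b : ℕ) := fun h => hb (Fin.ext h.symm)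
        rw [hA, if_neg hb', if_neg (by simp), zero_mul]
      · intro h; exact absurd (Finset.mem_univ _) h
    · have hm1' : m - 1 < N := by omega
      have hsplit : ∑ j, A 0 ⟨m, hm⟩ j * P j ⟨c, hc⟩
          = A 0 ⟨m, hm⟩ ⟨m, hm⟩ * P ⟨m, hm⟩ ⟨c, hc⟩
            + A 0 ⟨m, hm⟩ ⟨m - 1, hm1'⟩ * P ⟨m - 1, hm1'⟩ ⟨c, hc⟩ := by
        have hpair := Finset.sum_pair (f := fun j => A 0 ⟨m, hm⟩ j * P j ⟨c, hc⟩)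
          (a := (⟨m, hm⟩ : Fin N)) (b := ⟨m - 1, hm1'⟩) (by simp [Fin.ext_iff]; omega)
        rw [← hpair]
        symm
        apply Finset.sum_subset (Finset.subset_univ _)
        intro j _ hj
        simp only [Finset.mem_insert, Finset.mem_singleton, Fin.ext_iff] at hj
        push_neg at hj
        rw [hA, if_neg (by simp; omega), if_neg (by simp; omega), zero_mul]
      rw [hsplit, hA, hA, if_pos rfl, one_mul, if_neg (by simp; omega),
        if_pos (by simp; omega), hIH, hIH]
      simp only [Fin.val_mk]
      by_cases hcm : c ≤ m
      swap
      · rw [if_neg hcm, if_neg hcm, if_neg (by omega), mul_zero, add_zero]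
      · rcases eq_or_lt_of_le hcm with rfl | hlt
        · rw [if_pos le_rfl, if_pos le_rfl, if_neg (by omega), mul_zero, add_zero,
            Nat.sub_self]
          rw [Finset.filter_true_of_mem (fun σ _ => fun a b hab => a.elim0),
            Finset.filter_true_of_mem (fun σ _ => fun a b hab => a.elim0)]
          simp
        · rw [if_pos hcm, if_pos hcm, if_pos (by omega : c ≤ m - 1)]
          have e : m - c = (m - 1 - c) + 1 := by omega
          rw [e]
          set k' := m - 1 - c with hk'
          rw [← Finset.sum_filter_add_sum_filter_not
            (Finset.univ.filter
              (fun σ : Fin (k' + 1) → Fin (n + 1) => ∀ a b, a < b → σ a < σ b))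
            (fun σ => σ 0 = 0)]
          have h1 : ∑ τ ∈ Finset.univ.filter
                (fun τ : Fin (k' + 1) → Fin n => ∀ a b, a < b → τ a < τ b),
                ∏ j : Fin (k' + 1), w (τ j).succ (m - ((j : ℕ) + 1))
              = ∑ σ ∈ (Finset.univ.filter
                  (fun σ : Fin (k' + 1) → Fin (n + 1) => ∀ a b, a < b → σ a < σ b)).filter
                  (fun σ => ¬ σ 0 = 0),
                ∏ j : Fin (k' + 1), w (σ j) (m - ((j : ℕ) + 1)) := by
            apply Finset.sum_bij (fun τ _ => Fin.succ ∘ τ)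
            · intro τ hτ
              simp only [Finset.mem_filter, Finset.mem_univ, true_and] at hτ ⊢
              exact ⟨fun a b hab => Fin.succ_lt_succ_iff.mpr (hτ a b hab),
                Fin.succ_ne_zero _⟩
            · intro a _ b _ hab
              funext j
              exact Fin.succ_injective _ (congrFun hab j)
            · intro σ hσ
              simp only [Finset.mem_filter, Finset.mem_univ, true_and] at hσ
              obtain ⟨hsm, h0⟩ := hσ
              have hne : ∀ j, σ j ≠ 0 := by
                intro j
                rcases eq_or_ne j 0 with rfl | hj
                · exact h0
                · exact ((Fin.zero_le _).trans_lt (hsm 0 j (Fin.pos_of_ne_zero hj))).ne'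
              refine ⟨fun j => (σ j).pred (hne j), ?_, ?_⟩
              · simp only [Finset.mem_filter, Finset.mem_univ, true_and]
                intro a b hab
                rw [Fin.pred_lt_pred_iff]
                exact hsm a b hab
              · funext j
                simp [Fin.succ_pred]
            · intro τ hτ; rfl
          have h2 : w 0 (m - 1) * ∑ τ ∈ Finset.univ.filter
                (fun τ : Fin k' → Fin n => ∀ a b, a < b → τ a < τ b),
                ∏ j : Fin k', w (τ j).succ (m - 1 - ((j : ℕ) + 1))
              = ∑ σ ∈ (Finset.univ.filter
                  (fun σ : Fin (k' + 1) → Fin (n + 1) => ∀ a b, a < b → σ a < σ b)).filter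
                  (fun σ => σ 0 = 0),
                ∏ j : Fin (k' + 1), w (σ j) (m - ((j : ℕ) + 1)) := by
            rw [Finset.mul_sum]
            apply Finset.sum_bij (fun τ _ => Fin.cons 0 (Fin.succ ∘ τ))
            · intro τ hτ
              simp only [Finset.mem_filter, Finset.mem_univ, true_and] at hτ ⊢
              refine ⟨fun a b hab => ?_, Fin.cons_zero _ _⟩
              induction a using Fin.cases with
              | zero =>
                induction b using Fin.cases with
                | zero => exact absurd hab (lt_irrefl _)
                | succ j => simp only [Fin.cons_zero, Fin.cons_succ]; exact Fin.succ_pos _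
              | succ i =>
                induction b using Fin.cases with
                | zero => exact absurd hab (by simp)
                | succ j =>
                  simp only [Fin.cons_succ, Function.comp_apply]
                  exact Fin.succ_lt_succ_iff.mpr (hτ i j (Fin.succ_lt_succ_iff.mp hab))
            · intro a _ b _ hab
              funext j
              have := congrFun hab j.succ
              simp only [Fin.cons_succ, Function.comp_apply] at this
              exact Fin.succ_injective _ this
            · intro σ hσ
              simp only [Finset.mem_filter, Finset.mem_univ, true_and] at hσ
              obtain ⟨hsm, h0⟩ := hσ
              have hne : ∀ j : Fin k', σ j.succ ≠ 0 := by
                intro j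
                have := hsm 0 j.succ (Fin.succ_pos j)
                rw [h0] at this
                exact ((Fin.zero_le _).trans_lt this).ne'
              refine ⟨fun j => (σ j.succ).pred (hne j), ?_, ?_⟩
              · simp only [Finset.mem_filter, Finset.mem_univ, true_and]
                intro a b hab
                rw [Fin.pred_lt_pred_iff]
                exact hsm a.succ b.succ (Fin.succ_lt_succ_iff.mpr hab)
              · funext j
                induction j using Fin.cases with
                | zero => simp [h0]
                | succ i => simp [Fin.cons_succ, Fin.succ_pred]
            · intro τ hτ
              rw [Fin.prod_univ_succ]
              refine congrArg₂ (· * ·) ?_ ?_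
              · simp
              · refine Finset.prod_congr rfl fun j _ => ?_
                simp only [Fin.cons_succ, Function.comp_apply, Fin.val_succ]
                congr 1
                omega
          rw [h1, h2, add_comm]

lemma sum_congr_card {F : Type*} [Field F] (n k1 k2 : ℕ) (e : k1 = k2) (f : ℕ → Fin n → F) :
    (∑ σ ∈ Finset.univ.filter
        (fun σ : Fin k1 → Fin n => ∀ a b, a < b → σ a < σ b),
      ∏ j : Fin k1, f (j : ℕ) (σ j))
    = ∑ σ ∈ Finset.univ.filter
        (fun σ : Fin k2 → Fin n => ∀ a b, a < b → σ a < σ b),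
      ∏ j : Fin k2, f (j : ℕ) (σ j) := by
  subst e; rfl

lemma keyB {F : Type*} [Field F] {N : ℕ} (n : ℕ) (w : Fin n → ℕ → F)
    (A : Fin n → Matrix (Fin N) (Fin N) F)
    (hA : ∀ i r c, A i r c = if (r : ℕ) = (c : ℕ) then 1
      else if (r : ℕ) = (c : ℕ) + 1 then w i c else 0)
    (m k : ℕ) (hk : k ≤ m) (hm : m < N) (hc : m - k < N) :
    (List.ofFn A).prod ⟨m, hm⟩ ⟨m - k, hc⟩ =
      ∑ σ ∈ Finset.univ.filter
          (fun σ : Fin k → Fin n => ∀ a b, a < b → σ a < σ b),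
        ∏ j : Fin k, w (σ j) (m - ((j : ℕ) + 1)) := by
  rw [key n w A hA m (m - k) hm hc, if_pos (Nat.sub_le _ _)]
  exact sum_congr_card n _ _ (by omega) (fun j i => w i (m - (j + 1)))


/-- Let `L = L⁽¹⁾⋯L⁽ᵖ⁾` be a product of `N×N` lower unit
bidiagonal matrices whose subdiagonal entry in row `m` of `L⁽ⁱ⁾` is
`γ_{(m-1)p+m+i}`, all nonzero.  Then for each `m` and each `s = 1,…,p`, setting
`Γ_s = Π_{j=2}^{p-s+1} γ_{(m-j)p+m+s}`, the entry `γ_{(m-1)p+m+s}` satisfies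
`γ_{(m-1)p+m+s} = (l_{m,m-p+s-1}
    - Σ_{1≤σ₁<⋯<σ_{p-s+1}≤p, σ₁≠s} Π_{j=1}^{p-s+1} γ_{(m-j)p+σ_j+m-j+1}) / Γ_s`. -/
theorem stmt14 {F : Type*} [Field F] {N p : ℕ}
    (γ : ℕ → F) (hγ : ∀ n, γ n ≠ 0)
    (Lk : Fin p → Matrix (Fin N) (Fin N) F)
    (hLk : ∀ (i : Fin p) (r c : Fin N), Lk i r c =
      if (r : ℕ) = (c : ℕ) then 1
      else if (r : ℕ) = (c : ℕ) + 1 then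
        γ ((c : ℕ) * p + ((c : ℕ) + 1) + ((i : ℕ) + 1))
      else 0)
    (m s : ℕ) (hs1 : 1 ≤ s) (hsp : s ≤ p)
    (hm : p - s + 1 ≤ m) (hmN : m < N) :
    γ ((m - 1) * p + m + s) =
      ((List.ofFn Lk).prod ⟨m, hmN⟩ ⟨m - (p - s + 1), by omega⟩ -
        ∑ σ ∈ Finset.univ.filter
            (fun σ : Fin (p - s + 1) → Fin p =>
              (∀ a b, a < b → σ a < σ b) ∧ ((σ ⟨0, by omega⟩ : ℕ) + 1 ≠ s)),
          ∏ j : Fin (p - s + 1),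
            γ ((m - ((j : ℕ) + 1)) * p + ((σ j : ℕ) + 1)
                + (m - ((j : ℕ) + 1)) + 1)) /
      ∏ j ∈ Finset.Icc 2 (p - s + 1), γ ((m - j) * p + m + s) := by
  have hΓ : (∏ j ∈ Finset.Icc 2 (p - s + 1), γ ((m - j) * p + m + s)) ≠ 0 :=
    Finset.prod_ne_zero_iff.mpr fun i _ => hγ _
  -- the entry as a sum over strictly monotone σ, in the theorem's term form
  have hentry : (List.ofFn Lk).prod ⟨m, hmN⟩ ⟨m - (p - s + 1), by omega⟩ =
      ∑ σ ∈ Finset.univ.filter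
          (fun σ : Fin (p - s + 1) → Fin p => ∀ a b, a < b → σ a < σ b),
        ∏ j : Fin (p - s + 1),
          γ ((m - ((j : ℕ) + 1)) * p + ((σ j : ℕ) + 1)
              + (m - ((j : ℕ) + 1)) + 1) := by
    rw [keyB p (fun i c => γ (c * p + (c + 1) + ((i : ℕ) + 1))) Lk hLk m
      (p - s + 1) hm hmN (by omega)]
    refine Finset.sum_congr rfl fun σ _ => Finset.prod_congr rfl fun j _ => ?_
    congr 1
    ring
  -- split off the sigma with σ 0 + 1 = s
  have hsplit : ∑ σ ∈ Finset.univ.filter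
          (fun σ : Fin (p - s + 1) → Fin p => ∀ a b, a < b → σ a < σ b),
        ∏ j : Fin (p - s + 1),
          γ ((m - ((j : ℕ) + 1)) * p + ((σ j : ℕ) + 1)
              + (m - ((j : ℕ) + 1)) + 1)
      = γ ((m - 1) * p + m + s) *
          (∏ j ∈ Finset.Icc 2 (p - s + 1), γ ((m - j) * p + m + s)) +
        ∑ σ ∈ Finset.univ.filter
            (fun σ : Fin (p - s + 1) → Fin p =>
              (∀ a b, a < b → σ a < σ b) ∧ ((σ ⟨0, by omega⟩ : ℕ) + 1 ≠ s)),
          ∏ j : Fin (p - s + 1),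
            γ ((m - ((j : ℕ) + 1)) * p + ((σ j : ℕ) + 1)
                + (m - ((j : ℕ) + 1)) + 1) := by
    rw [← Finset.sum_filter_add_sum_filter_not
      (Finset.univ.filter (fun σ : Fin (p - s + 1) → Fin p => ∀ a b, a < b → σ a < σ b))
      (fun σ => (σ ⟨0, by omega⟩ : ℕ) + 1 = s)]
    congr 1
    · rw [Finset.filter_filter]
      have hset : Finset.univ.filter (fun σ : Fin (p - s + 1) → Fin p =>
          (∀ a b, a < b → σ a < σ b) ∧ (σ ⟨0, by omega⟩ : ℕ) + 1 = s)
          = {fun j : Fin (p - s + 1) => (⟨s - 1 + (j : ℕ), by omega⟩ : Fin p)} := by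
        ext σ
        simp only [Finset.mem_filter, Finset.mem_univ, true_and, Finset.mem_singleton]
        constructor
        · rintro ⟨hsm, h0⟩
          set v : ℕ → ℕ := fun j => if h : j < p - s + 1 then (σ ⟨j, h⟩ : ℕ) else 0 with hv
          have hvj : ∀ j (h : j < p - s + 1), v j = (σ ⟨j, h⟩ : ℕ) := fun j h => dif_pos h
          have hmono : ∀ a b, a < b → b < p - s + 1 → v a < v b := by
            intro a b hab hb
            rw [hvj a (by omega), hvj b hb]
            exact hsm ⟨a, by omega⟩ ⟨b, hb⟩ (by rw [Fin.mk_lt_mk]; exact hab)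
          have hbnd : ∀ j (h : j < p - s + 1), v j < p := by
            intro j h; rw [hvj j h]; exact (σ ⟨j, h⟩).isLt
          have hv0 : v 0 + 1 = s := by rw [hvj 0 (by omega)]; exact h0
          have hlow : ∀ j, j < p - s + 1 → s - 1 + j ≤ v j := by
            intro j
            induction j with
            | zero => intro h; omega
            | succ j ih =>
              intro h
              have h1 := ih (by omega)
              have h2 := hmono j (j + 1) (by omega) h
              omega
          have hup : ∀ t, t ≤ p - s → v (p - s - t) ≤ p - 1 - t := by
            intro t
            induction t with
            | zero => intro h; have := hbnd (p - s - 0) (by omega); omega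
            | succ t ih =>
              intro h
              have h1 := ih (by omega)
              have h2 := hmono (p - s - (t + 1)) (p - s - t) (by omega) (by omega)
              omega
          funext j
          apply Fin.ext
          have hL := hlow (j : ℕ) j.isLt
          have hU := hup (p - s - (j : ℕ)) (by omega)
          rw [show p - s - (p - s - (j : ℕ)) = (j : ℕ) from by omega] at hU
          have hvv : v (j : ℕ) = (σ j : ℕ) := hvj (j : ℕ) j.isLt
          show (σ j : ℕ) = s - 1 + (j : ℕ)
          omega
        · rintro rfl
          refine ⟨fun a b hab => ?_, ?_⟩
          · rw [Fin.lt_def] at hab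
            rw [Fin.mk_lt_mk]
            omega
          · show s - 1 + ((⟨0, by omega⟩ : Fin (p - s + 1)) : ℕ) + 1 = s
            simp
            omega
      rw [hset, Finset.sum_singleton]
      have hcanon : ∀ j : Fin (p - s + 1),
          (m - ((j : ℕ) + 1)) * p
              + (((⟨s - 1 + (j : ℕ), by omega⟩ : Fin p) : ℕ) + 1)
              + (m - ((j : ℕ) + 1)) + 1
            = (m - ((j : ℕ) + 1)) * p + m + s := by
        intro j
        have hj : (j : ℕ) < p - s + 1 := j.isLt
        generalize (m - ((j : ℕ) + 1)) * p = B
        show B + (s - 1 + (j : ℕ) + 1) + (m - ((j : ℕ) + 1)) + 1 = B + m + s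
        omega
      calc ∏ j : Fin (p - s + 1),
            γ ((m - ((j : ℕ) + 1)) * p
              + ((((fun j : Fin (p - s + 1) => (⟨s - 1 + (j : ℕ), by omega⟩ : Fin p)) j) : ℕ) + 1)
              + (m - ((j : ℕ) + 1)) + 1)
          = ∏ j : Fin (p - s + 1), γ ((m - ((j : ℕ) + 1)) * p + m + s) :=
            Finset.prod_congr rfl fun j _ => by rw [hcanon j]
        _ = γ ((m - 1) * p + m + s) *
            ∏ j ∈ Finset.Icc 2 (p - s + 1), γ ((m - j) * p + m + s) := by
            rw [Fin.prod_univ_succ]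
            congr 1
            try simp only [Fin.val_succ]
            rw [Fin.prod_univ_eq_prod_range (fun j => γ ((m - (j + 1 + 1)) * p + m + s))]
            rw [← Finset.Ico_add_one_right_eq_Icc, Finset.prod_Ico_eq_prod_range]
            rw [show p - s + 1 + 1 - 2 = p - s from by omega]
            refine Finset.prod_congr rfl fun i _ => ?_
            rw [show 2 + i = i + 1 + 1 from by omega]
    · rw [Finset.filter_filter]
  rw [hentry, hsplit, add_sub_cancel_right, mul_div_cancel_right₀ _ hΓ]
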